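/- Let Ā : [0,1] → ℝ be twice continuously differentiable with Ā(0) = V > 0, Ā'(0) ≤ −V, and (2 + 2 ln 2)·Ā(t) + (3 + ln 2)·Ā'(t) + Ā''(t) ≤ 0 for all t ∈ [0,1]. Then Ā(1) ≤ (V/(1 − ln 2))·(1/(2e) − (ln 2)/e²). -/

import Mathlib

theorem diff_ineq_final_bound
    (A : ℝ → ℝ) (hA : ContDiff ℝ 2 A)
    (V : ℝ) (hV : 0 < V)
    (h0 : A 0 = V) (h0' : deriv A 0 ≤ -V)
    (hineq : ∀ t ∈ Set.Icc (0:ℝ) 1,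
      (2 + 2 * Real.log 2) * A t + (3 + Real.log 2) * deriv A t
        + deriv (deriv A) t ≤ 0) :
    A 1 ≤ (V / (1 - Real.log 2)) *
      (1 / (2 * Real.exp 1) - Real.log 2 / (Real.exp 1) ^ 2) := by
  set L := Real.log 2 with hLdef
  have hL0 : 0 < L := Real.log_pos one_lt_two
  have hL1 : L < 1 := by
    have h := Real.log_lt_sub_one_of_pos (by norm_num : (0:ℝ) < 2) (by norm_num)
    linarith
  have h1L : 0 < 1 - L := by linarith
  have he : 0 < Real.exp 1 := Real.exp_pos 1
  have hA1 : Differentiable ℝ A := hA.differentiable two_ne_zero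
  have hA2 : Differentiable ℝ (deriv A) := by
    have h : ContDiff ℝ (1 + 1) A := by exact_mod_cast hA
    exact (contDiff_succ_iff_deriv.mp h).2.2.differentiable one_ne_zero
  set φ : ℝ → ℝ :=
    fun t => Real.exp (2 * t) * (deriv A t + (1 + L) * A t) - V * L with hφdef
  have hφd : ∀ t, HasDerivAt φ
      (Real.exp (2 * t) *
        ((2 + 2 * L) * A t + (3 + L) * deriv A t + deriv (deriv A) t)) t := by
    intro t
    have he1 : HasDerivAt (fun t => Real.exp (2 * t)) (Real.exp (2 * t) * (2 * 1)) t :=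
      ((hasDerivAt_id t).const_mul 2).exp
    have hin : HasDerivAt (fun t => deriv A t + (1 + L) * A t)
        (deriv (deriv A) t + (1 + L) * deriv A t) t :=
      ((hA2 t).hasDerivAt).add (((hA1 t).hasDerivAt).const_mul (1 + L))
    have := (he1.mul hin).sub_const (V * L)
    refine this.congr_deriv ?_
    ring
  have hφmono : AntitoneOn φ (Set.Icc 0 1) := by
    apply antitoneOn_of_deriv_nonpos (convex_Icc 0 1)
    · exact Continuous.continuousOn (by
        exact ((Real.continuous_exp.comp (continuous_const.mul continuous_id)).mul
          (hA2.continuous.add (continuous_const.mul hA1.continuous))).sub continuous_const)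
    · intro t _
      exact (hφd t).differentiableAt.differentiableWithinAt
    · intro t ht
      rw [interior_Icc] at ht
      rw [(hφd t).deriv]
      have h2 := hineq t ⟨ht.1.le, ht.2.le⟩
      have := (Real.exp_pos (2 * t)).le
      nlinarith
  have hφ0 : φ 0 ≤ 0 := by
    simp only [hφdef, mul_zero, Real.exp_zero, one_mul, h0]
    nlinarith
  have hkey : ∀ t ∈ Set.Icc (0:ℝ) 1,
      deriv A t + (1 + L) * A t ≤ V * L * Real.exp (-(2 * t)) := by
    intro t ht
    have h1 : φ t ≤ φ 0 := hφmono (Set.left_mem_Icc.mpr zero_le_one) ht ht.1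
    have h2 : Real.exp (2 * t) * (deriv A t + (1 + L) * A t) ≤ V * L := by
      simp only [hφdef] at h1 hφ0
      linarith
    have h3 : Real.exp (-(2 * t)) * (Real.exp (2 * t) *
        (deriv A t + (1 + L) * A t)) ≤ Real.exp (-(2 * t)) * (V * L) :=
      mul_le_mul_of_nonneg_left h2 (Real.exp_pos _).le
    calc deriv A t + (1 + L) * A t
        = Real.exp (-(2 * t)) * Real.exp (2 * t) * (deriv A t + (1 + L) * A t) := by
          rw [← Real.exp_add]; simp
      _ = Real.exp (-(2 * t)) * (Real.exp (2 * t) * (deriv A t + (1 + L) * A t)) := by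
          ring
      _ ≤ Real.exp (-(2 * t)) * (V * L) := h3
      _ = V * L * Real.exp (-(2 * t)) := by ring
  set ψ : ℝ → ℝ :=
    fun t => Real.exp ((1 + L) * t) * A t +
      (V * L / (1 - L)) * Real.exp ((L - 1) * t) with hψdef
  have hψd : ∀ t, HasDerivAt ψ
      (Real.exp ((1 + L) * t) * (deriv A t + (1 + L) * A t)
        - V * L * Real.exp ((L - 1) * t)) t := by
    intro t
    have he1 : HasDerivAt (fun t => Real.exp ((1 + L) * t))
        (Real.exp ((1 + L) * t) * ((1 + L) * 1)) t :=
      ((hasDerivAt_id t).const_mul (1 + L)).exp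
    have he2 : HasDerivAt (fun t => Real.exp ((L - 1) * t))
        (Real.exp ((L - 1) * t) * ((L - 1) * 1)) t :=
      ((hasDerivAt_id t).const_mul (L - 1)).exp
    have := (he1.mul (hA1 t).hasDerivAt).add (he2.const_mul (V * L / (1 - L)))
    refine this.congr_deriv ?_
    field_simp
    ring
  have hψmono : AntitoneOn ψ (Set.Icc 0 1) := by
    apply antitoneOn_of_deriv_nonpos (convex_Icc 0 1)
    · exact Continuous.continuousOn (by
        exact ((Real.continuous_exp.comp (continuous_const.mul continuous_id)).mul
          hA1.continuous).add (continuous_const.mul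
          (Real.continuous_exp.comp (continuous_const.mul continuous_id))))
    · intro t _
      exact (hψd t).differentiableAt.differentiableWithinAt
    · intro t ht
      rw [interior_Icc] at ht
      rw [(hψd t).deriv]
      have h1 := hkey t ⟨ht.1.le, ht.2.le⟩
      have h2 : Real.exp ((1 + L) * t) * (deriv A t + (1 + L) * A t) ≤
          Real.exp ((1 + L) * t) * (V * L * Real.exp (-(2 * t))) :=
        mul_le_mul_of_nonneg_left h1 (Real.exp_pos _).le
      have h3 : Real.exp ((1 + L) * t) * (V * L * Real.exp (-(2 * t))) =
          V * L * Real.exp ((L - 1) * t) := by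
        rw [mul_comm (V * L), ← mul_assoc, ← Real.exp_add]
        ring_nf
      linarith
  have hψ10 : ψ 1 ≤ ψ 0 :=
    hψmono (Set.left_mem_Icc.mpr zero_le_one) (Set.right_mem_Icc.mpr zero_le_one)
      zero_le_one
  have hexpa : Real.exp (1 + L) = Real.exp 1 * 2 := by
    rw [Real.exp_add, Real.exp_log (by norm_num : (0:ℝ) < 2)]
  have hexpb : Real.exp (L - 1) = 2 / Real.exp 1 := by
    rw [Real.exp_sub, Real.exp_log (by norm_num : (0:ℝ) < 2)]
  have hψ1 : ψ 1 = Real.exp 1 * 2 * A 1 + (V * L / (1 - L)) * (2 / Real.exp 1) := by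
    simp only [hψdef, mul_one, hexpa, hexpb]
  have hψ0 : ψ 0 = V + V * L / (1 - L) := by
    simp only [hψdef, mul_zero, Real.exp_zero, one_mul, mul_one, h0]
  rw [hψ1, hψ0] at hψ10
  have step : A 1 ≤ (V + V * L / (1 - L) - V * L / (1 - L) * (2 / Real.exp 1)) /
      (2 * Real.exp 1) := by
    rw [le_div_iff₀ (by positivity)]
    linarith
  refine step.trans (le_of_eq ?_)
  set E := Real.exp 1 with hE
  field_simp
  ring
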